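/- arXiv:1605.07174 — 5 statements merged into one kernel-verified Lean document; each statement's English description precedes it below -/
import Mathlib

section
/- Let K be an N×N real symmetric positive semidefinite matrix, P an S×N sampling matrix, y ∈ ℝ^S, μ > 0, let 𝓛 : ℝ^S → ℝ be an arbitrary loss function, and let Ω : ℝ → ℝ be nondecreasing on [0,∞). Define the objective J(ᾱ) := (1/S)·𝓛(y − P K ᾱ) + μ·Ω(√(ᾱᵀ K ᾱ)) for ᾱ ∈ ℝ^N. Then for every ᾱ ∈ ℝ^N there exists α ∈ ℝ^S such that P K (Pᵀ α) = P K ᾱ and J(Pᵀ α) ≤ J(ᾱ). Consequently, if J attains its infimum over ℝ^N, then it attains it at a vector of the form Pᵀ α with α ∈ ℝ^S; i.e., the kernel-based estimate can be expressed as f̂ = K Pᵀ α, a combination of only the kernel columns indexed by the sampled vertices (representer theorem for graph signals). -/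
open Matrix

/-- Representer theorem for graph signals. -/
theorem stmt_0 (N S : ℕ) (K : Matrix (Fin N) (Fin N) ℝ) (hK : K.PosSemidef)
    (idx : Fin S → Fin N) (hidx : StrictMono idx)
    (P : Matrix (Fin S) (Fin N) ℝ)
    (hP : ∀ s n, P s n = if n = idx s then 1 else 0)
    (y : Fin S → ℝ) (μ : ℝ) (hμ : 0 < μ)
    (L : (Fin S → ℝ) → ℝ) (Om : ℝ → ℝ) (hOm : MonotoneOn Om (Set.Ici 0))
    (J : (Fin N → ℝ) → ℝ)
    (hJ : ∀ a : Fin N → ℝ, J a = (1 / (S : ℝ)) * L (y - P *ᵥ (K *ᵥ a))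
      + μ * Om (Real.sqrt (a ⬝ᵥ (K *ᵥ a)))) :
    (∀ abar : Fin N → ℝ, ∃ α : Fin S → ℝ,
        P *ᵥ (K *ᵥ (Pᵀ *ᵥ α)) = P *ᵥ (K *ᵥ abar) ∧ J (Pᵀ *ᵥ α) ≤ J abar) ∧
    ((∃ a0 : Fin N → ℝ, ∀ a : Fin N → ℝ, J a0 ≤ J a) →
      ∃ α : Fin S → ℝ, ∀ a : Fin N → ℝ, J (Pᵀ *ᵥ α) ≤ J a) := by
  obtain ⟨B, hB⟩ : ∃ B : Matrix (Fin N) (Fin N) ℝ, K = Bᴴ * B := by open scoped MatrixOrder Matrix.Norms.L2Operator in exact CStarAlgebra.nonneg_iff_eq_star_mul_self.mp hK.nonneg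
  have hBT : K = Bᵀ * B := by simpa using hB
  have hKv : ∀ v : Fin N → ℝ, K *ᵥ v = Bᵀ *ᵥ (B *ᵥ v) := by
    intro v; rw [hBT, ← Matrix.mulVec_mulVec]
  have hquad : ∀ a : Fin N → ℝ, a ⬝ᵥ (K *ᵥ a) = (B *ᵥ a) ⬝ᵥ (B *ᵥ a) := by
    intro a
    rw [hKv, dotProduct_mulVec, Matrix.vecMul_transpose]
  have hinner : ∀ x y : EuclideanSpace ℝ (Fin N), (inner ℝ x y : ℝ) = (x : Fin N → ℝ) ⬝ᵥ (y : Fin N → ℝ) := by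
    intro x y
    simp [PiLp.inner_apply, dotProduct, RCLike.inner_apply, mul_comm]
  have key : ∀ abar : Fin N → ℝ, ∃ α : Fin S → ℝ,
      P *ᵥ (K *ᵥ (Pᵀ *ᵥ α)) = P *ᵥ (K *ᵥ abar) ∧ J (Pᵀ *ᵥ α) ≤ J abar := by
    intro abar
    let T : (Fin S → ℝ) →ₗ[ℝ] EuclideanSpace ℝ (Fin N) :=
      { toFun := fun α => WithLp.toLp 2 (B *ᵥ (Pᵀ *ᵥ α) : Fin N → ℝ)
        map_add' := by
          intro a b
          show WithLp.toLp 2 (B *ᵥ (Pᵀ *ᵥ (a + b)) : Fin N → ℝ) = WithLp.toLp 2 (B *ᵥ (Pᵀ *ᵥ a)) + WithLp.toLp 2 (B *ᵥ (Pᵀ *ᵥ b))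
          simp [Matrix.mulVec_add]
        map_smul' := by
          intro c a
          show WithLp.toLp 2 (B *ᵥ (Pᵀ *ᵥ (c • a)) : Fin N → ℝ) = c • WithLp.toLp 2 (B *ᵥ (Pᵀ *ᵥ a))
          simp [Matrix.mulVec_smul] }
    let W : Submodule ℝ (EuclideanSpace ℝ (Fin N)) := LinearMap.range T
    let f : EuclideanSpace ℝ (Fin N) := WithLp.toLp 2 (B *ᵥ abar : Fin N → ℝ)
    let g : EuclideanSpace ℝ (Fin N) := (W.orthogonalProjection f : EuclideanSpace ℝ (Fin N))
    obtain ⟨α, hα⟩ : ∃ α, T α = g := (W.orthogonalProjection f).2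
    have hgW : g ∈ W := (W.orthogonalProjection f).2
    have hperp : f - g ∈ Wᗮ := W.sub_starProjection_mem_orthogonal f
    have hTα : (B *ᵥ (Pᵀ *ᵥ α) : Fin N → ℝ) = (g : Fin N → ℝ) := congrArg WithLp.ofLp hα
    -- componentwise orthogonality
    have hcomp : ∀ s : Fin S, ∑ m, B m (idx s) * (f m - g m) = 0 := by
      intro s
      have hw : T (Pi.single s 1) ∈ W := ⟨Pi.single s 1, rfl⟩
      have h0 := Submodule.inner_right_of_mem_orthogonal hw hperp
      rw [hinner] at h0
      have hTe : ∀ m, (T (Pi.single s 1) : Fin N → ℝ) m = B m (idx s) := by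
        intro m
        show (B *ᵥ (Pᵀ *ᵥ Pi.single s 1)) m = B m (idx s)
        have : (Pᵀ *ᵥ Pi.single s 1) = fun n => if n = idx s then 1 else 0 := by
          funext n
          simp only [Matrix.mulVec, dotProduct, Matrix.transpose_apply, hP]
          rw [Finset.sum_eq_single s]
          · simp [Pi.single_apply]
          · intro b _ hb
            by_cases hnb : n = idx b
            · simp [Pi.single_apply, hb]
            · simp [hnb]
          · simp
        rw [this]
        simp [Matrix.mulVec, dotProduct, mul_ite]
      calc ∑ m, B m (idx s) * (f m - g m)
          = ∑ m, (T (Pi.single s 1) : Fin N → ℝ) m * (f - g) m := by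
            apply Finset.sum_congr rfl; intro m _; rw [hTe m]; rfl
        _ = 0 := h0
    have hcond1 : P *ᵥ (K *ᵥ (Pᵀ *ᵥ α)) = P *ᵥ (K *ᵥ abar) := by
      funext s
      rw [hKv, hKv, hTα]
      show (P *ᵥ (Bᵀ *ᵥ (g : Fin N → ℝ))) s = (P *ᵥ (Bᵀ *ᵥ (B *ᵥ abar))) s
      have hPapp : ∀ x : Fin N → ℝ, (P *ᵥ (Bᵀ *ᵥ x)) s = ∑ m, B m (idx s) * x m := by
        intro x
        simp only [Matrix.mulVec, dotProduct, hP, ite_mul, one_mul, zero_mul]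
        rw [Finset.sum_ite_eq' Finset.univ (idx s) (fun n => ∑ m, Bᵀ n m * x m)]
        simp [Matrix.transpose_apply]
      rw [hPapp, hPapp]
      have := hcomp s
      have hf : (f : Fin N → ℝ) = B *ᵥ abar := rfl
      rw [← hf]
      have : ∑ m, B m (idx s) * f m - ∑ m, B m (idx s) * g m = 0 := by
        rw [← Finset.sum_sub_distrib]
        simpa [mul_sub] using hcomp s
      linarith
    have hnormsq : ∀ x : EuclideanSpace ℝ (Fin N), (x : Fin N → ℝ) ⬝ᵥ (x : Fin N → ℝ) = ‖x‖ ^ 2 := by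
      intro x
      rw [← hinner, real_inner_self_eq_norm_sq]
    have hqg : (Pᵀ *ᵥ α) ⬝ᵥ (K *ᵥ (Pᵀ *ᵥ α)) = ‖g‖ ^ 2 := by
      rw [hquad, hTα, hnormsq]
    have hqf : abar ⬝ᵥ (K *ᵥ abar) = ‖f‖ ^ 2 := by
      rw [hquad]; exact hnormsq f
    have hgle : ‖g‖ ^ 2 ≤ ‖f‖ ^ 2 := by
      have hi : (inner ℝ g (f-g) : ℝ) = 0 := Submodule.inner_right_of_mem_orthogonal hgW hperp
      have hfe : f = g + (f - g) := by abel
      have := norm_add_sq_real g (f - g)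
      rw [← hfe] at this
      nlinarith [norm_nonneg (f - g), this, hi]
    refine ⟨α, hcond1, ?_⟩
    rw [hJ, hJ, hcond1]
    have hOmle : Om (Real.sqrt ((Pᵀ *ᵥ α) ⬝ᵥ (K *ᵥ (Pᵀ *ᵥ α)))) ≤
        Om (Real.sqrt (abar ⬝ᵥ (K *ᵥ abar))) := by
      apply hOm (Real.sqrt_nonneg _) (Real.sqrt_nonneg _)
      apply Real.sqrt_le_sqrt
      rw [hqg, hqf]; exact hgle
    have := mul_le_mul_of_nonneg_left hOmle hμ.le
    linarith
  refine ⟨key, ?_⟩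
  rintro ⟨a0, ha0⟩
  obtain ⟨α, -, hle⟩ := key a0
  exact ⟨α, fun a => hle.trans (ha0 a)⟩
end

section
/- Let U be an N×N real orthogonal matrix, B ⊆ {1,…,N}, and let U_B be the N×|B| submatrix of U consisting of the columns indexed by B. For β > 0 let K_β := U D_β Uᵀ, where D_β is the diagonal matrix with (D_β)_{nn} = β if n ∈ B and (D_β)_{nn} = 1/β if n ∉ B. Let P be an S×N sampling matrix, y ∈ ℝ^S, and μ > 0, and assume that the |B|×|B| matrix U_Bᵀ Pᵀ P U_B is invertible. Then for every β > 0 the matrix P K_β Pᵀ + μS·I_S is invertible, and as β → ∞ the kernel ridge regression estimate K_β Pᵀ (P K_β Pᵀ + μS·I_S)^{-1} y converges to the least-squares bandlimited estimate U_B (U_Bᵀ Pᵀ P U_B)^{-1} U_Bᵀ Pᵀ y. -/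
open Matrix Filter

private lemma aux_key_id {n : Type*} [Fintype n] [DecidableEq n]
    (Q R G : Matrix n n ℝ) (hQQ : Q*Q = Q) (hRR : R*R = R)
    (hQR : Q*R = 0) (hRQ : R*Q = 0) (c s : ℝ) (hs : s ≠ 0) :
    ((Q + s•R) * G * (Q + s•R) + (c*s^2)•Q + c•R) * ((s^2)⁻¹•Q + s•R)
      = (Q + s•R) * (G * ((s^2)⁻¹•Q + s^2•R) + c•1) := by
  simp only [add_mul, mul_add, Matrix.smul_mul, Matrix.mul_smul, hQQ, hRR, hQR, hRQ,
    smul_smul, smul_zero, mul_zero, zero_mul, add_zero, zero_add, mul_one, Matrix.mul_one,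
    Matrix.mul_assoc]
  match_scalars <;> field_simp <;> ring

private lemma aux_key_id2 {n : Type*} [Fintype n] [DecidableEq n]
    (Q R : Matrix n n ℝ) (hQQ : Q*Q = Q) (hRR : R*R = R)
    (hQR : Q*R = 0) (hRQ : R*Q = 0) (s : ℝ) :
    (Q + s•R) * ((s^2)⁻¹•Q + s•R) = (s^2)⁻¹•Q + s^2•R := by
  simp only [add_mul, mul_add, Matrix.smul_mul, Matrix.mul_smul, hQQ, hRR, hQR, hRQ,
    smul_smul, smul_zero, add_zero, zero_add]
  match_scalars <;> field_simp <;> ring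

private lemma aux_contAt_mul {X : Type*} [TopologicalSpace X] {l m n : Type*} [Fintype m]
    {f : X → Matrix l m ℝ} {g : X → Matrix m n ℝ} {x : X}
    (hf : ContinuousAt f x) (hg : ContinuousAt g x) :
    ContinuousAt (fun t => f t * g t) x := by
  apply continuousAt_pi.mpr; intro i
  apply continuousAt_pi.mpr; intro j
  simp only [Matrix.mul_apply]
  have hfe : ∀ (i' : l) (k : m), ContinuousAt (fun t => f t i' k) x := by
    intro i' k
    exact (((continuous_apply k).comp (continuous_apply i')).tendsto _).comp hf
  have hge : ∀ (k : m) (j' : n), ContinuousAt (fun t => g t k j') x := by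
    intro k j'
    exact (((continuous_apply j').comp (continuous_apply k)).tendsto _).comp hg
  exact tendsto_finset_sum _ fun k _ => (hfe i k).mul (hge k j)

/-- Kernel ridge regression with a bandlimited kernel converges to the
least-squares bandlimited estimate as β → ∞. -/
theorem stmt_1 (N S : ℕ) (U : Matrix (Fin N) (Fin N) ℝ) (hU : Uᵀ * U = 1)
    (B : Finset (Fin N))
    (UB : Matrix (Fin N) B ℝ)
    (hUB : UB = U.submatrix id (fun b : B => (b : Fin N)))
    (idx : Fin S → Fin N) (hidx : StrictMono idx)
    (P : Matrix (Fin S) (Fin N) ℝ)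
    (hP : ∀ s n, P s n = if n = idx s then 1 else 0)
    (y : Fin S → ℝ) (μ : ℝ) (hμ : 0 < μ)
    (Kb : ℝ → Matrix (Fin N) (Fin N) ℝ)
    (hKb : ∀ β : ℝ, Kb β = U * Matrix.diagonal (fun n => if n ∈ B then β else β⁻¹) * Uᵀ)
    (hInv : IsUnit (UBᵀ * Pᵀ * P * UB)) :
    (∀ β : ℝ, 0 < β →
      IsUnit (P * Kb β * Pᵀ + (μ * S) • (1 : Matrix (Fin S) (Fin S) ℝ))) ∧
    Tendsto (fun β : ℝ => (Kb β * Pᵀ * (P * Kb β * Pᵀ + (μ * S) • 1)⁻¹) *ᵥ y)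
      atTop (nhds ((UB * (UBᵀ * Pᵀ * P * UB)⁻¹ * UBᵀ * Pᵀ) *ᵥ y)) := by
  rcases Nat.eq_zero_or_pos S with hS | hS
  · -- trivial case S = 0
    subst hS
    constructor
    · intro β _
      have : (P * Kb β * Pᵀ + (μ * (0:ℕ)) • 1 : Matrix (Fin 0) (Fin 0) ℝ) = 1 :=
        Subsingleton.elim _ _
      rw [this]; exact isUnit_one
    · have hz : ∀ M : Matrix (Fin N) (Fin 0) ℝ, M *ᵥ y = 0 := by
        intro M; ext i; simp [Matrix.mulVec, dotProduct]
      simp only [hz]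
      exact tendsto_const_nhds
  -- main case S ≥ 1
  have hc : 0 < μ * S := mul_pos hμ (by exact_mod_cast hS)
  set c : ℝ := μ * S with hcdef
  -- basic orthogonality facts
  have hUUT : U * Uᵀ = 1 := mul_eq_one_comm.mp hU
  have h1 : UBᵀ * UB = 1 := by
    subst hUB
    ext b b'
    have h := congrFun (congrFun hU (b : Fin N)) (b' : Fin N)
    simp only [Matrix.mul_apply, Matrix.transpose_apply, Matrix.one_apply] at h ⊢
    simp only [Matrix.submatrix_apply, id]
    rw [h]
    exact if_congr Subtype.ext_iff.symm rfl rfl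
  set G11 : Matrix B B ℝ := UBᵀ * Pᵀ * P * UB with hG11
  set Q : Matrix (Fin N) (Fin N) ℝ := UB * UBᵀ with hQdef
  set R : Matrix (Fin N) (Fin N) ℝ := 1 - Q with hRdef
  have hQQ : Q * Q = Q := by
    rw [hQdef, Matrix.mul_assoc, ← Matrix.mul_assoc UBᵀ, h1, Matrix.one_mul]
  have hQR : Q * R = 0 := by rw [hRdef, Matrix.mul_sub, Matrix.mul_one, hQQ, sub_self]
  have hRQ : R * Q = 0 := by rw [hRdef, Matrix.sub_mul, Matrix.one_mul, hQQ, sub_self]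
  have hRR : R * R = R := by
    rw [hRdef, Matrix.sub_mul, Matrix.one_mul, Matrix.mul_sub, Matrix.mul_one, hQQ]
    abel
  have hRUB : R * UB = 0 := by
    rw [hRdef, Matrix.sub_mul, Matrix.one_mul, hQdef, Matrix.mul_assoc, h1, Matrix.mul_one,
      sub_self]
  have hUBR : UBᵀ * R = 0 := by
    rw [hRdef, Matrix.mul_sub, Matrix.mul_one, hQdef, ← Matrix.mul_assoc, h1, Matrix.one_mul,
      sub_self]
  -- diagonal decomposition
  have hQdiag : U * Matrix.diagonal (fun n => if n ∈ B then (1:ℝ) else 0) * Uᵀ = Q := by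
    rw [hQdef]
    subst hUB
    ext m n
    conv_lhs => rw [Matrix.mul_apply]
    conv_rhs => rw [Matrix.mul_apply]
    simp only [Matrix.mul_diagonal, Matrix.transpose_apply, Matrix.submatrix_apply, id]
    rw [Finset.sum_coe_sort B (fun x => U m x * U n x)]
    simp [ite_mul, mul_ite, mul_one, mul_zero, zero_mul, Finset.sum_ite_mem]
  have hK : ∀ β : ℝ, Kb β = β • Q + β⁻¹ • R := by
    intro β
    have hsplit : Matrix.diagonal (fun n => if n ∈ B then β else β⁻¹)
        = β • Matrix.diagonal (fun n => if n ∈ B then (1:ℝ) else 0)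
          + β⁻¹ • (1 - Matrix.diagonal (fun n => if n ∈ B then (1:ℝ) else 0)) := by
      ext i j
      by_cases hij : i = j
      · subst hij
        by_cases hiB : i ∈ B <;>
          simp [Matrix.diagonal_apply, Matrix.one_apply, hiB]
      · simp [Matrix.diagonal_apply, Matrix.one_apply, hij]
    rw [hKb β, hsplit]
    rw [Matrix.mul_add, Matrix.add_mul, Matrix.mul_smul, Matrix.smul_mul,
      Matrix.mul_smul, Matrix.smul_mul, Matrix.mul_sub, Matrix.sub_mul, Matrix.mul_one]
    rw [hQdiag, hUUT, ← hRdef]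
  -- Part 1: invertibility
  have part1 : ∀ β : ℝ, 0 < β →
      IsUnit (P * Kb β * Pᵀ + c • (1 : Matrix (Fin S) (Fin S) ℝ)) := by
    intro β hβ
    have hT : Uᵀ = Uᴴ := by ext i j; simp [Matrix.conjTranspose_apply]
    have hKpsd : (Kb β).PosSemidef := by
      rw [hKb β, hT]
      refine (Matrix.posSemidef_diagonal_iff.mpr ?_).mul_mul_conjTranspose_same U
      intro i
      by_cases hiB : i ∈ B <;> simp [hiB, hβ.le, (inv_pos.mpr hβ).le]
    have hPT : Pᵀ = Pᴴ := by ext i j; simp [Matrix.conjTranspose_apply]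
    have hPKP : (P * Kb β * Pᵀ).PosSemidef := by
      rw [hPT]; exact hKpsd.mul_mul_conjTranspose_same P
    have hcI : ((c • 1 : Matrix (Fin S) (Fin S) ℝ)).PosDef := by
      have : (c • 1 : Matrix (Fin S) (Fin S) ℝ) = Matrix.diagonal (fun _ => c) := by
        ext i j; simp [Matrix.one_apply, Matrix.diagonal_apply, mul_ite]
      rw [this]
      exact Matrix.posDef_diagonal_iff.mpr fun _ => hc
    exact (Matrix.PosDef.posSemidef_add hPKP hcI).isUnit
  refine ⟨part1, ?_⟩
  -- Part 2: the limit
  have hdet11 : IsUnit G11.det := (Matrix.isUnit_iff_isUnit_det _).mp hInv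
  set G : Matrix (Fin N) (Fin N) ℝ := Pᵀ * P with hGdef
  set Nm : ℝ → Matrix (Fin N) (Fin N) ℝ :=
    fun s => (Q + s•R) * G * (Q + s•R) + (c*s^2)•Q + c•R with hNm
  set W : ℝ → Matrix (Fin N) (Fin S) ℝ :=
    fun s => (Q + s•R) * (Nm s)⁻¹ * ((Q + s•R) * Pᵀ) with hW
  set J : Matrix (Fin N) (Fin N) ℝ := UB * G11⁻¹ * UBᵀ + c⁻¹ • R with hJ
  clear_value G11 Q R G Nm W J
  have hN0 : Nm 0 = UB * G11 * UBᵀ + c • R := by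
    rw [hNm]
    simp only [zero_smul, add_zero, mul_zero, zero_mul, ne_eq, OfNat.ofNat_ne_zero,
      not_false_eq_true, zero_pow, smul_zero, zero_add]
    congr 1
    rw [hQdef, hGdef, hG11]
    simp only [Matrix.mul_assoc]
  have hG11inv : G11 * G11⁻¹ = 1 := Matrix.mul_nonsing_inv _ hdet11
  have e1 : (UB * G11 * UBᵀ) * (UB * G11⁻¹ * UBᵀ) = Q := by
    calc (UB * G11 * UBᵀ) * (UB * G11⁻¹ * UBᵀ)
        = UB * (G11 * ((UBᵀ * UB) * (G11⁻¹ * UBᵀ))) := by simp only [Matrix.mul_assoc]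
      _ = UB * (G11 * (G11⁻¹ * UBᵀ)) := by rw [h1, Matrix.one_mul]
      _ = UB * ((G11 * G11⁻¹) * UBᵀ) := by rw [Matrix.mul_assoc]
      _ = Q := by rw [hG11inv, Matrix.one_mul, hQdef]
  have e2 : (UB * G11 * UBᵀ) * R = 0 := by
    calc (UB * G11 * UBᵀ) * R = UB * (G11 * (UBᵀ * R)) := by simp only [Matrix.mul_assoc]
      _ = 0 := by rw [hUBR, Matrix.mul_zero, Matrix.mul_zero]
  have e3 : R * (UB * G11⁻¹ * UBᵀ) = 0 := by
    rw [← Matrix.mul_assoc, ← Matrix.mul_assoc, hRUB, Matrix.zero_mul, Matrix.zero_mul]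
  have hNJ : Nm 0 * J = 1 := by
    rw [hN0, hJ, Matrix.add_mul, Matrix.mul_add, Matrix.mul_add, Matrix.mul_smul,
      Matrix.smul_mul, Matrix.smul_mul, Matrix.mul_smul, smul_smul]
    rw [e1, e2, e3, hRR, smul_zero, smul_zero, add_zero, zero_add,
      mul_inv_cancel₀ hc.ne', one_smul, hRdef]
    abel
  have hNdet0 : (Nm 0).det ≠ 0 := by
    have hdj : (Nm 0).det * J.det = 1 := by rw [← Matrix.det_mul, hNJ, Matrix.det_one]
    intro h
    rw [h, zero_mul] at hdj
    exact zero_ne_one hdj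
  have hNinv0 : (Nm 0)⁻¹ = J := Matrix.inv_eq_right_inv hNJ
  have e4 : Q * (UB * G11⁻¹ * UBᵀ) = UB * G11⁻¹ * UBᵀ := by
    calc Q * (UB * G11⁻¹ * UBᵀ) = UB * ((UBᵀ * UB) * (G11⁻¹ * UBᵀ)) := by
          rw [hQdef]; simp only [Matrix.mul_assoc]
      _ = UB * (G11⁻¹ * UBᵀ) := by rw [h1, Matrix.one_mul]
      _ = UB * G11⁻¹ * UBᵀ := by rw [Matrix.mul_assoc]
  have e5 : UBᵀ * Q = UBᵀ := by
    rw [hQdef, ← Matrix.mul_assoc, h1, Matrix.one_mul]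
  have hW0 : W 0 = UB * G11⁻¹ * UBᵀ * Pᵀ := by
    simp only [hW, zero_smul, add_zero]
    rw [hNinv0, hJ, Matrix.mul_add, Matrix.mul_smul, e4, hQR, smul_zero, add_zero]
    calc (UB * G11⁻¹ * UBᵀ) * (Q * Pᵀ) = UB * G11⁻¹ * ((UBᵀ * Q) * Pᵀ) := by
          simp only [Matrix.mul_assoc]
      _ = UB * G11⁻¹ * UBᵀ * Pᵀ := by rw [e5]; simp only [Matrix.mul_assoc]
  -- continuity
  have cD : Continuous fun s : ℝ => Q + s • R :=
    continuous_const.add (continuous_id.smul continuous_const)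
  have contN : Continuous Nm := by
    rw [hNm]
    exact (((cD.matrix_mul continuous_const).matrix_mul cD).add
      ((continuous_const.mul (continuous_pow 2)).smul continuous_const)).add
      continuous_const
  have contNinv : ContinuousAt (fun s => (Nm s)⁻¹) 0 := by
    have hri : ContinuousAt Ring.inverse (Nm 0).det := by
      rw [Ring.inverse_eq_inv']
      exact continuousAt_inv₀ hNdet0
    exact (continuousAt_matrix_inv _ hri).comp contN.continuousAt
  have contW : ContinuousAt W 0 := by
    rw [hW]
    exact aux_contAt_mul (aux_contAt_mul cD.continuousAt contNinv)
      (aux_contAt_mul cD.continuousAt continuousAt_const)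
  set g : ℝ → ℝ := fun β => (Real.sqrt β)⁻¹ with hgdef
  have hg : Tendsto g atTop (nhds 0) := by
    have hs : Tendsto Real.sqrt atTop atTop := by
      rw [Filter.tendsto_atTop_atTop]
      intro b
      refine ⟨b ^ 2, fun a ha => ?_⟩
      calc b ≤ |b| := le_abs_self b
        _ = Real.sqrt (b ^ 2) := (Real.sqrt_sq_eq_abs b).symm
        _ ≤ Real.sqrt a := Real.sqrt_le_sqrt ha
    exact hs.inv_tendsto_atTop
  have hdetN : ∀ᶠ β in atTop, (Nm (g β)).det ≠ 0 := by
    have ht : Tendsto (fun β => (Nm (g β)).det) atTop (nhds ((Nm 0).det)) := by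
      show Tendsto ((fun s => (Nm s).det) ∘ g) atTop (nhds ((Nm 0).det))
      exact Filter.Tendsto.comp ((contN.matrix_det).continuousAt) hg
    exact ht.eventually_ne hNdet0
  have hEq : ∀ᶠ β in atTop,
      Kb β * Pᵀ * (P * Kb β * Pᵀ + c • 1)⁻¹ = W (g β) := by
    filter_upwards [hdetN, eventually_gt_atTop 0] with β hdet hβ
    have hspos : 0 < g β := inv_pos.mpr (Real.sqrt_pos.mpr hβ)
    set s : ℝ := g β with hsdef
    have hs2 : s ^ 2 = β⁻¹ := by
      rw [hsdef, hgdef]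
      simp only []
      rw [inv_pow, Real.sq_sqrt hβ.le]
    have hs2' : (s ^ 2)⁻¹ = β := by rw [hs2, inv_inv]
    have hKs : Kb β = (s ^ 2)⁻¹ • Q + s ^ 2 • R := by rw [hK β, hs2', hs2]
    have hMdet : IsUnit (P * Kb β * Pᵀ + c • (1 : Matrix (Fin S) (Fin S) ℝ)).det :=
      (Matrix.isUnit_iff_isUnit_det _).mp (part1 β hβ)
    have hNsdet : IsUnit (Nm s).det := isUnit_iff_ne_zero.mpr hdet
    have hstep : (Q + s • R) * Pᵀ * (P * Kb β * Pᵀ + c • 1)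
        = Nm s * (((s ^ 2)⁻¹ • Q + s • R) * Pᵀ) := by
      have hkey := aux_key_id Q R G hQQ hRR hQR hRQ c s hspos.ne'
      calc (Q + s • R) * Pᵀ * (P * Kb β * Pᵀ + c • 1)
          = ((Q + s • R) * (G * ((s ^ 2)⁻¹ • Q + s ^ 2 • R) + c • 1)) * Pᵀ := by
            rw [hKs, hGdef]
            simp only [Matrix.mul_add, Matrix.add_mul, Matrix.mul_smul, Matrix.smul_mul,
              Matrix.mul_one, Matrix.mul_assoc]
        _ = (Nm s * ((s ^ 2)⁻¹ • Q + s • R)) * Pᵀ := by rw [← hkey, hNm]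
        _ = Nm s * (((s ^ 2)⁻¹ • Q + s • R) * Pᵀ) := by rw [Matrix.mul_assoc]
    have hWsM : W s * (P * Kb β * Pᵀ + c • 1) = Kb β * Pᵀ := by
      simp only [hW]
      calc (Q + s • R) * (Nm s)⁻¹ * ((Q + s • R) * Pᵀ) * (P * Kb β * Pᵀ + c • 1)
          = (Q + s • R) * ((Nm s)⁻¹ * ((Q + s • R) * Pᵀ * (P * Kb β * Pᵀ + c • 1))) := by
            simp only [Matrix.mul_assoc]
        _ = (Q + s • R) * ((Nm s)⁻¹ * (Nm s * (((s ^ 2)⁻¹ • Q + s • R) * Pᵀ))) := by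
            rw [hstep]
        _ = (Q + s • R) * (((s ^ 2)⁻¹ • Q + s • R) * Pᵀ) := by
            rw [Matrix.nonsing_inv_mul_cancel_left _ _ hNsdet]
        _ = ((Q + s • R) * ((s ^ 2)⁻¹ • Q + s • R)) * Pᵀ := by rw [Matrix.mul_assoc]
        _ = ((s ^ 2)⁻¹ • Q + s ^ 2 • R) * Pᵀ := by
            rw [aux_key_id2 Q R hQQ hRR hQR hRQ s]
        _ = Kb β * Pᵀ := by rw [← hKs]
    calc Kb β * Pᵀ * (P * Kb β * Pᵀ + c • 1)⁻¹
        = (W s * (P * Kb β * Pᵀ + c • 1)) * (P * Kb β * Pᵀ + c • 1)⁻¹ := by rw [hWsM]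
      _ = W s := Matrix.mul_nonsing_inv_cancel_right _ _ hMdet
  have hlim : Tendsto (fun β => W (g β)) atTop (nhds (W 0)) := by
    show Tendsto (W ∘ g) atTop (nhds (W 0))
    exact Filter.Tendsto.comp contW hg
  have hmv : Continuous (fun M : Matrix (Fin N) (Fin S) ℝ => M *ᵥ y) :=
    continuous_id.matrix_mulVec continuous_const
  have hfinal : Tendsto (fun β => W (g β) *ᵥ y) atTop (nhds (W 0 *ᵥ y)) := by
    show Tendsto ((fun M : Matrix (Fin N) (Fin S) ℝ => M *ᵥ y) ∘ fun β => W (g β)) atTop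
      (nhds (W 0 *ᵥ y))
    exact Filter.Tendsto.comp (hmv.tendsto (W 0)) hlim
  rw [hW0] at hfinal
  refine Tendsto.congr' ?_ hfinal
  filter_upwards [hEq] with β h
  rw [h]
end

section
/- Let (Ω, ℙ) be a probability space, and let x : Ω → ℝ^N and ε : Ω → ℝ^S be random vectors whose components are square-integrable, satisfying E[x xᵀ] = C, E[ε εᵀ] = σ²·I_S with σ² > 0, and E[x εᵀ] = 0. Let P be an S×N sampling matrix and y := P x + ε. For any N×N real symmetric positive semidefinite matrix K and any μ > 0, let f̂(K, μ) := K Pᵀ (P K Pᵀ + μS·I_S)^{-1} y denote the kernel ridge regression estimate, and let MSE(K, μ) := E‖x − f̂(K, μ)‖². Then MSE(C, σ²/S) ≤ MSE(K, μ) for every N×N real symmetric positive semidefinite matrix K and every μ > 0; i.e., the covariance kernel K = C with μ = σ²/S minimizes the mean-square error among all kernel ridge regression estimators. -/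
open Matrix MeasureTheory

private lemma aux_int_mul {Ω : Type*} [MeasureSpace Ω] {f g : Ω → ℝ}
    (hf : MemLp f 2 volume) (hg : MemLp g 2 volume) :
    Integrable (fun ω => f ω * g ω) volume := by
  have h : MemLp (f • g) 1 volume := by
    refine hg.smul hf (hpqr := ⟨?_⟩)
    rw [ENNReal.inv_two_add_inv_two, inv_one]
  have h' := memLp_one_iff_integrable.mp h
  exact h'

/-- quadratic form of a second-moment matrix is nonnegative -/
private lemma aux_psd {S' : ℕ} {Ω : Type*} [MeasureSpace Ω]
    (z : Ω → Fin S' → ℝ) (hz : ∀ s, MemLp (fun ω => z ω s) 2 volume)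
    (Mm : Matrix (Fin S') (Fin S') ℝ)
    (hMm : ∀ s t, Mm s t = ∫ ω, z ω s * z ω t) (u : Fin S' → ℝ) :
    0 ≤ u ⬝ᵥ (Mm *ᵥ u) := by
  have hint : ∀ s t : Fin S', Integrable (fun ω => z ω s * z ω t) volume :=
    fun s t => aux_int_mul (hz s) (hz t)
  have key : u ⬝ᵥ (Mm *ᵥ u) = ∫ ω, (∑ s, u s * z ω s) ^ 2 := by
    have hpt : ∀ ω, (∑ s, u s * z ω s) ^ 2
        = ∑ s, ∑ t, (u s * u t) * (z ω s * z ω t) := by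
      intro ω
      rw [sq, Finset.sum_mul_sum]
      exact Finset.sum_congr rfl fun s _ => Finset.sum_congr rfl fun t _ => by ring
    have hI : ∀ s : Fin S', Integrable (fun ω => ∑ t, (u s * u t) * (z ω s * z ω t)) volume :=
      fun s => integrable_finset_sum _ fun t _ => (hint s t).const_mul _
    calc u ⬝ᵥ (Mm *ᵥ u) = ∑ s, ∑ t, (u s * u t) * Mm s t := by
          simp only [dotProduct, mulVec]
          refine Finset.sum_congr rfl fun s _ => ?_
          rw [Finset.mul_sum]
          exact Finset.sum_congr rfl fun t _ => by ring
      _ = ∑ s, ∑ t, (u s * u t) * ∫ ω, z ω s * z ω t := by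
          exact Finset.sum_congr rfl fun s _ => Finset.sum_congr rfl fun t _ => by rw [hMm]
      _ = ∑ s, ∑ t, ∫ ω, (u s * u t) * (z ω s * z ω t) := by
          exact Finset.sum_congr rfl fun s _ => Finset.sum_congr rfl fun t _ =>
            (integral_const_mul _ _).symm
      _ = ∫ ω, ∑ s, ∑ t, (u s * u t) * (z ω s * z ω t) := by
          rw [integral_finset_sum _ fun s _ => hI s]
          exact Finset.sum_congr rfl fun s _ =>
            (integral_finset_sum _ fun t _ => (hint s t).const_mul _).symm
      _ = ∫ ω, (∑ s, u s * z ω s) ^ 2 := by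
          exact integral_congr_ae (Filter.Eventually.of_forall fun ω => (hpt ω).symm)
  rw [key]
  exact integral_nonneg fun ω => sq_nonneg _

/-- Expansion of the mean square error as a quadratic in the estimation matrix. -/
private lemma aux_expand {N' S' : ℕ} {Ω : Type*} [MeasureSpace Ω]
    (x : Ω → Fin N' → ℝ) (z : Ω → Fin S' → ℝ)
    (hx : ∀ i, MemLp (fun ω => x ω i) 2 volume)
    (hz : ∀ s, MemLp (fun ω => z ω s) 2 volume)
    (Cm : Matrix (Fin N') (Fin N') ℝ) (Bm : Matrix (Fin N') (Fin S') ℝ)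
    (Mm : Matrix (Fin S') (Fin S') ℝ)
    (hCm : ∀ i, ∫ ω, x ω i * x ω i = Cm i i)
    (hBm : ∀ i s, ∫ ω, x ω i * z ω s = Bm i s)
    (hMm : ∀ s t, ∫ ω, z ω s * z ω t = Mm s t)
    (A : Matrix (Fin N') (Fin S') ℝ) :
    ∫ ω, ∑ i, (x ω i - ∑ s, A i s * z ω s) ^ 2
      = trace Cm - 2 * trace (Aᵀ * Bm) + trace (A * Mm * Aᵀ) := by
  have Ixx : ∀ i : Fin N', Integrable (fun ω => x ω i * x ω i) volume :=
    fun i => aux_int_mul (hx i) (hx i)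
  have Ixz : ∀ (i : Fin N') (s : Fin S'), Integrable (fun ω => x ω i * z ω s) volume :=
    fun i s => aux_int_mul (hx i) (hz s)
  have Izz : ∀ s t : Fin S', Integrable (fun ω => z ω s * z ω t) volume :=
    fun s t => aux_int_mul (hz s) (hz t)
  have I1 : Integrable (fun ω => ∑ i, x ω i * x ω i) volume :=
    integrable_finset_sum _ fun i _ => Ixx i
  have I2 : Integrable (fun ω => ∑ i, ∑ s, A i s * (x ω i * z ω s)) volume :=
    integrable_finset_sum _ fun i _ => integrable_finset_sum _ fun s _ =>
      (Ixz i s).const_mul _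
  have I3 : Integrable (fun ω => ∑ i, ∑ s, ∑ t, (A i s * A i t) * (z ω s * z ω t)) volume :=
    integrable_finset_sum _ fun i _ => integrable_finset_sum _ fun s _ =>
      integrable_finset_sum _ fun t _ => (Izz s t).const_mul _
  have hpt : ∀ ω, (∑ i, (x ω i - ∑ s, A i s * z ω s) ^ 2)
      = (∑ i, x ω i * x ω i) - 2 * (∑ i, ∑ s, A i s * (x ω i * z ω s))
        + (∑ i, ∑ s, ∑ t, (A i s * A i t) * (z ω s * z ω t)) := by
    intro ω
    rw [Finset.mul_sum, ← Finset.sum_sub_distrib, ← Finset.sum_add_distrib]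
    refine Finset.sum_congr rfl fun i _ => ?_
    have e1 : ∑ s, A i s * (x ω i * z ω s) = x ω i * ∑ s, A i s * z ω s := by
      rw [Finset.mul_sum]
      exact Finset.sum_congr rfl fun s _ => by ring
    have e2 : ∑ s, ∑ t, (A i s * A i t) * (z ω s * z ω t)
        = (∑ s, A i s * z ω s) * (∑ t, A i t * z ω t) := by
      rw [Finset.sum_mul_sum]
      exact Finset.sum_congr rfl fun s _ => Finset.sum_congr rfl fun t _ => by ring
    rw [e1, e2]
    ring
  have hF1 : ∫ ω, ∑ i, x ω i * x ω i = trace Cm := by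
    rw [integral_finset_sum _ fun i _ => Ixx i]
    simp only [hCm]
    simp [Matrix.trace, Matrix.diag]
  have hF2 : ∫ ω, ∑ i, ∑ s, A i s * (x ω i * z ω s) = trace (Aᵀ * Bm) := by
    rw [integral_finset_sum _ fun i _ => integrable_finset_sum _ fun s _ =>
      (Ixz i s).const_mul (A i s)]
    have htr2 : trace (Aᵀ * Bm) = ∑ i, ∑ s, A i s * Bm i s := by
      simp only [Matrix.trace, Matrix.diag, Matrix.mul_apply, Matrix.transpose_apply]
      exact Finset.sum_comm
    rw [htr2]
    refine Finset.sum_congr rfl fun i _ => ?_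
    rw [integral_finset_sum _ fun s _ => (Ixz i s).const_mul (A i s)]
    exact Finset.sum_congr rfl fun s _ => by rw [integral_const_mul, hBm]
  have hF3 : ∫ ω, ∑ i, ∑ s, ∑ t, (A i s * A i t) * (z ω s * z ω t)
      = trace (A * Mm * Aᵀ) := by
    rw [integral_finset_sum _ fun i _ => integrable_finset_sum _ fun s _ =>
      integrable_finset_sum _ fun t _ => (Izz s t).const_mul (A i s * A i t)]
    have htr3 : trace (A * Mm * Aᵀ) = ∑ i, ∑ s, ∑ t, (A i s * A i t) * Mm s t := by
      simp only [Matrix.trace, Matrix.diag, Matrix.mul_apply, Matrix.transpose_apply]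
      refine Finset.sum_congr rfl fun i _ => ?_
      calc ∑ t, (∑ s, A i s * Mm s t) * A i t
          = ∑ t, ∑ s, (A i s * A i t) * Mm s t := by
            refine Finset.sum_congr rfl fun t _ => ?_
            rw [Finset.sum_mul]
            exact Finset.sum_congr rfl fun s _ => by ring
        _ = ∑ s, ∑ t, (A i s * A i t) * Mm s t :=
            Finset.sum_comm (s := Finset.univ) (t := Finset.univ)
              (f := fun t s => (A i s * A i t) * Mm s t)
    rw [htr3]
    refine Finset.sum_congr rfl fun i _ => ?_
    rw [integral_finset_sum _ fun s _ => integrable_finset_sum _ fun t _ =>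
      (Izz s t).const_mul (A i s * A i t)]
    refine Finset.sum_congr rfl fun s _ => ?_
    rw [integral_finset_sum _ fun t _ => (Izz s t).const_mul (A i s * A i t)]
    exact Finset.sum_congr rfl fun t _ => by rw [integral_const_mul, hMm]
  calc ∫ ω, ∑ i, (x ω i - ∑ s, A i s * z ω s) ^ 2
      = ∫ ω, ((∑ i, x ω i * x ω i) - 2 * (∑ i, ∑ s, A i s * (x ω i * z ω s))
          + (∑ i, ∑ s, ∑ t, (A i s * A i t) * (z ω s * z ω t))) :=
        integral_congr_ae (Filter.Eventually.of_forall fun ω => hpt ω)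
    _ = (∫ ω, ∑ i, x ω i * x ω i) - 2 * (∫ ω, ∑ i, ∑ s, A i s * (x ω i * z ω s))
          + ∫ ω, ∑ i, ∑ s, ∑ t, (A i s * A i t) * (z ω s * z ω t) := by
        have I12 : Integrable (fun ω => (∑ i, x ω i * x ω i)
            - 2 * (∑ i, ∑ s, A i s * (x ω i * z ω s))) volume :=
          I1.sub (I2.const_mul 2)
        rw [integral_add I12 I3, integral_sub I1 (I2.const_mul 2), integral_const_mul]
    _ = trace Cm - 2 * trace (Aᵀ * Bm) + trace (A * Mm * Aᵀ) := by
        rw [hF1, hF2, hF3]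

/-- completing the square for the trace quadratic -/
private lemma aux_tr {N' S' : ℕ} (Mm : Matrix (Fin S') (Fin S') ℝ) (hMs : Mmᵀ = Mm)
    (Bm Astar A : Matrix (Fin N') (Fin S') ℝ) (hA : Astar * Mm = Bm) :
    (trace (A * Mm * Aᵀ) - 2 * trace (Aᵀ * Bm))
      - (trace (Astar * Mm * Astarᵀ) - 2 * trace (Astarᵀ * Bm))
      = trace ((A - Astar) * Mm * (A - Astar)ᵀ) := by
  have h0 : Mm * Astarᵀ = Bmᵀ := by rw [← hA, Matrix.transpose_mul, hMs]
  have h1 : trace (A * Mm * Astarᵀ) = trace (Aᵀ * Bm) := by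
    rw [Matrix.mul_assoc, h0, ← Matrix.trace_transpose (A * Bmᵀ), Matrix.transpose_mul,
      Matrix.transpose_transpose, Matrix.trace_mul_comm]
  have h2 : trace (Astar * Mm * Aᵀ) = trace (Aᵀ * Bm) := by
    rw [hA, Matrix.trace_mul_comm]
  have h3 : trace (Astar * Mm * Astarᵀ) = trace (Astarᵀ * Bm) := by
    rw [hA, Matrix.trace_mul_comm]
  have hexp : trace ((A - Astar) * Mm * (A - Astar)ᵀ)
      = trace (A * Mm * Aᵀ) - trace (Astar * Mm * Aᵀ)
        - (trace (A * Mm * Astarᵀ) - trace (Astar * Mm * Astarᵀ)) := by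
    rw [Matrix.transpose_sub, Matrix.sub_mul, Matrix.mul_sub, Matrix.sub_mul,
      Matrix.sub_mul, Matrix.trace_sub, Matrix.trace_sub, Matrix.trace_sub]
  rw [hexp, h1, h2, h3]
  ring

private lemma aux_tr_nonneg {N' S' : ℕ} (Mm : Matrix (Fin S') (Fin S') ℝ)
    (hq : ∀ u : Fin S' → ℝ, 0 ≤ u ⬝ᵥ (Mm *ᵥ u)) (D : Matrix (Fin N') (Fin S') ℝ) :
    0 ≤ trace (D * Mm * Dᵀ) := by
  have hdiag : ∀ i, (D * Mm * Dᵀ) i i = (fun s => D i s) ⬝ᵥ (Mm *ᵥ fun s => D i s) := by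
    intro i
    simp only [Matrix.mul_apply, Matrix.transpose_apply, dotProduct, mulVec]
    calc ∑ t, (∑ s, D i s * Mm s t) * D i t
        = ∑ t, ∑ s, D i s * (Mm s t * D i t) := by
          refine Finset.sum_congr rfl fun t _ => ?_
          rw [Finset.sum_mul]
          exact Finset.sum_congr rfl fun s _ => by ring
      _ = ∑ s, ∑ t, D i s * (Mm s t * D i t) :=
          Finset.sum_comm (s := Finset.univ) (t := Finset.univ)
            (f := fun t s => D i s * (Mm s t * D i t))
      _ = ∑ s, D i s * ∑ t, Mm s t * D i t := by
          exact Finset.sum_congr rfl fun s _ => (Finset.mul_sum _ _ _).symm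
  have : trace (D * Mm * Dᵀ) = ∑ i, (fun s => D i s) ⬝ᵥ (Mm *ᵥ fun s => D i s) := by
    simp only [Matrix.trace, Matrix.diag]
    exact Finset.sum_congr rfl fun i _ => hdiag i
  rw [this]
  exact Finset.sum_nonneg fun i _ => hq _

/-- The covariance kernel with μ = σ²/S minimizes the MSE among kernel ridge
regression estimators. -/
theorem stmt_2 (N S : ℕ) (hS : 0 < S)
    (Ω : Type*) [MeasureSpace Ω] [IsProbabilityMeasure (volume : Measure Ω)]
    (x : Ω → Fin N → ℝ) (ε : Ω → Fin S → ℝ)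
    (hx : ∀ i, MemLp (fun ω => x ω i) 2 volume)
    (hε : ∀ s, MemLp (fun ω => ε ω s) 2 volume)
    (C : Matrix (Fin N) (Fin N) ℝ) (σ2 : ℝ) (hσ2 : 0 < σ2)
    (hC : ∀ i j, ∫ ω, x ω i * x ω j = C i j)
    (hεε : ∀ s t, ∫ ω, ε ω s * ε ω t = if s = t then σ2 else 0)
    (hxε : ∀ i s, ∫ ω, x ω i * ε ω s = 0)
    (idx : Fin S → Fin N) (hidx : StrictMono idx)
    (P : Matrix (Fin S) (Fin N) ℝ)
    (hP : ∀ s n, P s n = if n = idx s then 1 else 0)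
    (MSE : Matrix (Fin N) (Fin N) ℝ → ℝ → ℝ)
    (hMSE : ∀ (K : Matrix (Fin N) (Fin N) ℝ) (μ : ℝ), MSE K μ =
      ∫ ω, ∑ i, (x ω i -
        ((K * Pᵀ * (P * K * Pᵀ + (μ * S) • 1)⁻¹) *ᵥ (P *ᵥ x ω + ε ω)) i) ^ 2) :
    ∀ K : Matrix (Fin N) (Fin N) ℝ, K.PosSemidef → ∀ μ : ℝ, 0 < μ →
      MSE C (σ2 / S) ≤ MSE K μ := by
  intro K _hK μ hμ
  -- the combined random vector z = Px + ε
  set z : Ω → Fin S → ℝ := fun ω s => x ω (idx s) + ε ω s with hzdef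
  have hz : ∀ s, MemLp (fun ω => z ω s) 2 volume := fun s => (hx (idx s)).add (hε s)
  -- symmetry of C
  have Csymm : ∀ i j, C j i = C i j := by
    intro i j
    rw [← hC j i, ← hC i j]
    exact integral_congr_ae (Filter.Eventually.of_forall fun ω => mul_comm _ _)
  -- entries of C * Pᵀ
  have hCP : ∀ i s, (C * Pᵀ) i s = C i (idx s) := by
    intro i s
    simp [Matrix.mul_apply, Matrix.transpose_apply, hP, mul_ite, mul_one, mul_zero,
      Finset.sum_ite_eq', Finset.mem_univ]
  -- entries of P * C * Pᵀ
  have hPCPT : ∀ s t, (P * C * Pᵀ) s t = C (idx s) (idx t) := by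
    intro s t
    simp [Matrix.mul_apply, Matrix.transpose_apply, hP, ite_mul, mul_ite, one_mul,
      mul_one, zero_mul, mul_zero, Finset.sum_ite_eq', Finset.mem_univ]
  set Mm : Matrix (Fin S) (Fin S) ℝ := P * C * Pᵀ + σ2 • 1 with hMdef
  have hMmE : ∀ s t, Mm s t = C (idx s) (idx t) + (if s = t then σ2 else 0) := by
    intro s t
    simp [hMdef, Matrix.add_apply, Matrix.smul_apply, Matrix.one_apply, hPCPT,
      smul_eq_mul, mul_ite, mul_one, mul_zero]
  -- second moments of z
  have hBint : ∀ i s, ∫ ω, x ω i * z ω s = (C * Pᵀ) i s := by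
    intro i s
    have e : (fun ω => x ω i * z ω s)
        = fun ω => x ω i * x ω (idx s) + x ω i * ε ω s := by
      funext ω; simp [hzdef]; ring
    rw [e, integral_add (aux_int_mul (hx i) (hx (idx s))) (aux_int_mul (hx i) (hε s)),
      hC, hxε, add_zero, hCP]
  have hMint : ∀ s t, ∫ ω, z ω s * z ω t = Mm s t := by
    intro s t
    have e : (fun ω => z ω s * z ω t)
        = fun ω => (x ω (idx s) * x ω (idx t) + x ω (idx s) * ε ω t)
            + (ε ω s * x ω (idx t) + ε ω s * ε ω t) := by
      funext ω; simp [hzdef]; ring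
    have hεx : ∫ ω, ε ω s * x ω (idx t) = 0 := by
      rw [show (fun ω => ε ω s * x ω (idx t)) = fun ω => x ω (idx t) * ε ω s from
        funext fun ω => mul_comm _ _]
      exact hxε _ _
    have J1 : Integrable (fun ω => x ω (idx s) * x ω (idx t) + x ω (idx s) * ε ω t)
        volume := (aux_int_mul (hx (idx s)) (hx (idx t))).add (aux_int_mul (hx (idx s)) (hε t))
    have J2 : Integrable (fun ω => ε ω s * x ω (idx t) + ε ω s * ε ω t) volume :=
      (aux_int_mul (hε s) (hx (idx t))).add (aux_int_mul (hε s) (hε t))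
    rw [e, integral_add J1 J2,
      integral_add (aux_int_mul (hx (idx s)) (hx (idx t))) (aux_int_mul (hx (idx s)) (hε t)),
      integral_add (aux_int_mul (hε s) (hx (idx t))) (aux_int_mul (hε s) (hε t)),
      hC, hxε, hεx, hεε, hMmE]
    ring
  -- Mm is positive definite
  have hq : ∀ u : Fin S → ℝ, 0 ≤ u ⬝ᵥ (Mm *ᵥ u) :=
    aux_psd z hz Mm (fun s t => (hMint s t).symm)
  have Cherm : C.IsHermitian := by
    ext i j
    simp only [Matrix.conjTranspose_apply, star_trivial]
    exact Csymm i j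
  have hMherm : Mm.IsHermitian := by
    rw [hMdef]
    refine Matrix.IsHermitian.add ?_ ?_
    · have := Matrix.isHermitian_mul_mul_conjTranspose P Cherm
      rwa [Matrix.conjTranspose_eq_transpose_of_trivial] at this
    · show (σ2 • (1 : Matrix (Fin S) (Fin S) ℝ)).IsHermitian
      ext i j
      simp [Matrix.conjTranspose_apply, Matrix.one_apply, smul_eq_mul, mul_ite,
        mul_one, mul_zero]
      by_cases h : j = i
      · simp [h]
      · rw [if_neg h, if_neg (fun hij => h hij.symm)]
  have hMsymmT : Mmᵀ = Mm := by
    have := hMherm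
    rwa [Matrix.IsHermitian, Matrix.conjTranspose_eq_transpose_of_trivial] at this
  have hMpd : Mm.PosDef := by
    refine Matrix.PosDef.of_dotProduct_mulVec_pos hMherm fun u hu => ?_
    have h1 : star u ⬝ᵥ (Mm *ᵥ u) = u ⬝ᵥ (Mm *ᵥ u) := by
      simp [star_trivial]
    rw [hMdef] at h1 ⊢
    have hsplit : u ⬝ᵥ ((P * C * Pᵀ + σ2 • 1) *ᵥ u)
        = u ⬝ᵥ ((P * C * Pᵀ) *ᵥ u) + σ2 * (u ⬝ᵥ u) := by
      rw [Matrix.add_mulVec, dotProduct_add, Matrix.smul_mulVec,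
        Matrix.one_mulVec, dotProduct_smul, smul_eq_mul]
    have hPCpsd : ∀ v : Fin S → ℝ, 0 ≤ v ⬝ᵥ ((P * C * Pᵀ) *ᵥ v) := by
      intro v
      refine aux_psd (fun ω s => x ω (idx s)) (fun s => hx (idx s)) (P * C * Pᵀ)
        (fun s t => ?_) v
      rw [hPCPT, hC]
    have hupos : 0 < u ⬝ᵥ u := by
      have : u ⬝ᵥ u = star u ⬝ᵥ u := by simp [star_trivial]
      rw [this]
      exact dotProduct_star_self_pos_iff.mpr hu
    rw [h1, hsplit]
    exact add_pos_of_nonneg_of_pos (hPCpsd u) (mul_pos hσ2 hupos)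
  have hMdet : IsUnit Mm.det := hMpd.det_pos.ne'.isUnit
  -- the two estimation matrices
  set A : Matrix (Fin N) (Fin S) ℝ := K * Pᵀ * (P * K * Pᵀ + (μ * S) • 1)⁻¹ with hAdef
  set A0 : Matrix (Fin N) (Fin S) ℝ := C * Pᵀ * Mm⁻¹ with hA0def
  have hA0M : A0 * Mm = C * Pᵀ := by
    rw [hA0def, Matrix.mul_assoc, Matrix.nonsing_inv_mul _ hMdet, Matrix.mul_one]
  -- rewrite the integrands
  have hvec : ∀ ω, P *ᵥ x ω + ε ω = z ω := by
    intro ω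
    funext s
    simp [Matrix.mulVec, dotProduct, hP, ite_mul, one_mul, zero_mul,
      Finset.sum_ite_eq', Finset.mem_univ, hzdef]
  have hmse_eq : ∀ B : Matrix (Fin N) (Fin S) ℝ,
      (∫ ω, ∑ i, (x ω i - (B *ᵥ (P *ᵥ x ω + ε ω)) i) ^ 2)
        = trace C - 2 * trace (Bᵀ * (C * Pᵀ)) + trace (B * Mm * Bᵀ) := by
    intro B
    have e : ∀ ω, (∑ i, (x ω i - (B *ᵥ (P *ᵥ x ω + ε ω)) i) ^ 2)
        = ∑ i, (x ω i - ∑ s, B i s * z ω s) ^ 2 := by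
      intro ω
      refine Finset.sum_congr rfl fun i _ => ?_
      rw [hvec ω]
      simp [Matrix.mulVec, dotProduct]
    rw [integral_congr_ae (Filter.Eventually.of_forall e)]
    exact aux_expand x z hx hz C (C * Pᵀ) Mm (fun i => hC i i) hBint hMint B
  -- put MSE in quadratic form
  have hσS : σ2 / (S : ℝ) * (S : ℝ) = σ2 :=
    div_mul_cancel₀ _ (Nat.cast_ne_zero.mpr hS.ne')
  have hC_side : MSE C (σ2 / S) = trace C - 2 * trace (A0ᵀ * (C * Pᵀ)) + trace (A0 * Mm * A0ᵀ) := by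
    rw [hMSE]
    rw [show C * Pᵀ * (P * C * Pᵀ + (σ2 / ↑S * ↑S) • 1)⁻¹ = A0 by rw [hσS, hA0def, hMdef]]
    exact hmse_eq A0
  have hK_side : MSE K μ = trace C - 2 * trace (Aᵀ * (C * Pᵀ)) + trace (A * Mm * Aᵀ) := by
    rw [hMSE]
    exact hmse_eq A
  rw [hC_side, hK_side]
  have hdiff := aux_tr Mm hMsymmT (C * Pᵀ) A0 A hA0M
  have hnn := aux_tr_nonneg Mm hq (A - A0)
  linarith [hdiff, hnn]
end

section
/- Let K be an N×N real symmetric positive semidefinite matrix and let P be an S×N sampling matrix. Then for every ᾱ ∈ ℝ^N there exist α ∈ ℝ^S and β ∈ ℝ^N with P K β = 0 such that K ᾱ = K Pᵀ α + K β. -/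
open Matrix
open scoped MatrixOrder

/-- For a real matrix `A`, the range of `Aᵀ * A` equals the range of `Aᵀ`. -/
lemma range_transpose_mul_self_aux {m n : ℕ} (A : Matrix (Fin m) (Fin n) ℝ) :
    LinearMap.range (Aᵀ * A).mulVecLin = LinearMap.range Aᵀ.mulVecLin := by
  apply Submodule.eq_of_le_of_finrank_eq
  · rintro x ⟨v, rfl⟩
    exact ⟨A *ᵥ v, by simp [mulVecLin_apply, mulVec_mulVec]⟩
  · have h1 : (Aᵀ * A).rank = A.rank := A.rank_transpose_mul_self
    have h2 : Aᵀ.rank = A.rank := A.rank_transpose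
    simpa [Matrix.rank] using h1.trans h2.symm

/-- Decomposition of any RKHS graph signal K ᾱ into a part expanded over the
sampled vertices and a part vanishing on the sampling set. -/
theorem stmt_4 (N S : ℕ) (K : Matrix (Fin N) (Fin N) ℝ) (hK : K.PosSemidef)
    (idx : Fin S → Fin N) (hidx : StrictMono idx)
    (P : Matrix (Fin S) (Fin N) ℝ)
    (hP : ∀ s n, P s n = if n = idx s then 1 else 0) :
    ∀ abar : Fin N → ℝ, ∃ (α : Fin S → ℝ) (β : Fin N → ℝ),
      P *ᵥ (K *ᵥ β) = 0 ∧ K *ᵥ abar = K *ᵥ (Pᵀ *ᵥ α) + K *ᵥ β := by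
  intro abar
  set C := CFC.sqrt K with hC
  have hCsym : Cᵀ = C := by
    have h := (CFC.sqrt_nonneg K).posSemidef.isHermitian
    simpa [Matrix.IsHermitian, conjTranspose_eq_transpose_of_trivial] using h
  have hCC : C * C = K := CFC.sqrt_mul_sqrt_self K hK.nonneg
  set A : Matrix (Fin N) (Fin S) ℝ := C * Pᵀ with hA
  have hAT : Aᵀ = P * C := by
    rw [hA, transpose_mul, transpose_transpose, hCsym]
  have hATA : Aᵀ * A = P * K * Pᵀ := by
    rw [hAT, hA, ← hCC, Matrix.mul_assoc, Matrix.mul_assoc, Matrix.mul_assoc]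
  -- P K abar lies in the range of (Aᵀ A)
  have hmem : P *ᵥ (K *ᵥ abar) ∈ LinearMap.range (Aᵀ * A).mulVecLin := by
    rw [range_transpose_mul_self_aux]
    refine ⟨C *ᵥ abar, ?_⟩
    simp only [mulVecLin_apply, hAT, mulVec_mulVec, Matrix.mul_assoc, hCC]
  obtain ⟨α, hα⟩ := hmem
  rw [mulVecLin_apply, hATA] at hα
  refine ⟨α, abar - Pᵀ *ᵥ α, ?_, ?_⟩
  · rw [mulVec_sub, mulVec_sub]
    have : P *ᵥ (K *ᵥ (Pᵀ *ᵥ α)) = P *ᵥ (K *ᵥ abar) := by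
      rw [← hα]; simp [mulVec_mulVec, Matrix.mul_assoc]
    rw [this, sub_self]
  · rw [mulVec_sub]; abel
end

section
/- Let K_1, …, K_M be N×N real symmetric positive semidefinite matrices, P an S×N sampling matrix, y ∈ ℝ^S, and μ > 0. Define J(ᾱ_1, …, ᾱ_M) := (1/S)‖y − Σ_{m=1}^M P K_m ᾱ_m‖² + μ Σ_{m=1}^M √(ᾱ_mᵀ K_m ᾱ_m) for ᾱ_1, …, ᾱ_M ∈ ℝ^N. Then for every tuple (ᾱ_1, …, ᾱ_M) ∈ (ℝ^N)^M there exist α_1, …, α_M ∈ ℝ^S such that J(Pᵀ α_1, …, Pᵀ α_M) ≤ J(ᾱ_1, …, ᾱ_M). Consequently, if J attains its infimum, it attains it at a tuple of the form (Pᵀ α_1, …, Pᵀ α_M), i.e., each component signal can be expanded as f̂_m = K_m Pᵀ α_m over only the sampled vertices. -/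
open Matrix

lemma exists_sol {S N : ℕ} (B : Matrix (Fin S) (Fin N) ℝ) (z : Fin N → ℝ) :
    ∃ α : Fin S → ℝ, (B * Bᵀ) *ᵥ α = B *ᵥ z := by
  have hle : LinearMap.range ((B * Bᵀ).mulVecLin) ≤ LinearMap.range (B.mulVecLin) := by
    rintro x ⟨v, rfl⟩
    exact ⟨Bᵀ *ᵥ v, by rw [mulVecLin_apply, mulVecLin_apply, mulVec_mulVec]⟩
  have hrank : (B * Bᵀ).rank = B.rank := B.rank_self_mul_transpose
  have heq : LinearMap.range ((B * Bᵀ).mulVecLin) = LinearMap.range (B.mulVecLin) :=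
    Submodule.eq_of_le_of_finrank_le hle (le_of_eq hrank.symm)
  have hmem : B *ᵥ z ∈ LinearMap.range ((B * Bᵀ).mulVecLin) := by
    rw [heq]; exact ⟨z, rfl⟩
  exact hmem

open scoped MatrixOrder in
lemma key_step {S N : ℕ} (K : Matrix (Fin N) (Fin N) ℝ) (hK : K.PosSemidef)
    (P : Matrix (Fin S) (Fin N) ℝ) (w : Fin N → ℝ) :
    ∃ α : Fin S → ℝ,
      P *ᵥ (K *ᵥ (Pᵀ *ᵥ α)) = P *ᵥ (K *ᵥ w) ∧
      (Pᵀ *ᵥ α) ⬝ᵥ (K *ᵥ (Pᵀ *ᵥ α)) ≤ w ⬝ᵥ (K *ᵥ w) := by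
  have hL : (CFC.sqrt K).PosSemidef := (CFC.sqrt_nonneg K).posSemidef
  set L := CFC.sqrt K with hLdef
  have hLL : L * L = K := CFC.sqrt_mul_sqrt_self K hK.nonneg
  have hLt : Lᵀ = L := by
    have := hL.1
    rwa [Matrix.IsHermitian, conjTranspose_eq_transpose_of_trivial] at this
  obtain ⟨α, hα⟩ := exists_sol (P * L) (L *ᵥ w)
  have hBB : (P * L) * (P * L)ᵀ = P * K * Pᵀ := by
    rw [transpose_mul, hLt, ← hLL]; simp [Matrix.mul_assoc]
  rw [hBB] at hα
  have h1 : P *ᵥ (K *ᵥ (Pᵀ *ᵥ α)) = P *ᵥ (K *ᵥ w) := by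
    calc P *ᵥ (K *ᵥ (Pᵀ *ᵥ α)) = (P * K * Pᵀ) *ᵥ α := by
          rw [mulVec_mulVec, mulVec_mulVec]
      _ = (P * L) *ᵥ (L *ᵥ w) := hα
      _ = P *ᵥ (K *ᵥ w) := by rw [mulVec_mulVec, mulVec_mulVec, Matrix.mul_assoc, hLL]
  refine ⟨α, h1, ?_⟩
  have h2 : (Pᵀ *ᵥ α) ⬝ᵥ (K *ᵥ (Pᵀ *ᵥ α)) = (Pᵀ *ᵥ α) ⬝ᵥ (K *ᵥ w) := by
    have h := congrArg (fun x => α ⬝ᵥ x) h1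
    simpa only [dotProduct_mulVec, mulVec_transpose] using h
  have hKt : Kᵀ = K := by
    have := hK.1
    rwa [Matrix.IsHermitian, conjTranspose_eq_transpose_of_trivial] at this
  have hsym : w ⬝ᵥ (K *ᵥ (Pᵀ *ᵥ α)) = (Pᵀ *ᵥ α) ⬝ᵥ (K *ᵥ w) := by
    rw [dotProduct_mulVec w, ← mulVec_transpose, hKt, dotProduct_comm]
  have h3 : 0 ≤ (w - Pᵀ *ᵥ α) ⬝ᵥ (K *ᵥ (w - Pᵀ *ᵥ α)) := by simpa using hK.dotProduct_mulVec_nonneg (w - Pᵀ *ᵥ α)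
  have hexp : (w - Pᵀ *ᵥ α) ⬝ᵥ (K *ᵥ (w - Pᵀ *ᵥ α)) =
      w ⬝ᵥ (K *ᵥ w) - w ⬝ᵥ (K *ᵥ (Pᵀ *ᵥ α)) - (Pᵀ *ᵥ α) ⬝ᵥ (K *ᵥ w)
        + (Pᵀ *ᵥ α) ⬝ᵥ (K *ᵥ (Pᵀ *ᵥ α)) := by
    simp only [mulVec_sub, dotProduct_sub, sub_dotProduct]
    ring
  rw [hexp, hsym] at h3
  linarith

/-- Representer theorem for multi-kernel graph signal reconstruction by RKHS
superposition. -/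
theorem stmt_8 (N S M : ℕ) (K : Fin M → Matrix (Fin N) (Fin N) ℝ)
    (hK : ∀ m, (K m).PosSemidef)
    (idx : Fin S → Fin N) (hidx : StrictMono idx)
    (P : Matrix (Fin S) (Fin N) ℝ)
    (hP : ∀ s n, P s n = if n = idx s then 1 else 0)
    (y : Fin S → ℝ) (μ : ℝ) (hμ : 0 < μ)
    (J : (Fin M → Fin N → ℝ) → ℝ)
    (hJ : ∀ a : Fin M → Fin N → ℝ, J a =
      (1 / (S : ℝ)) * (∑ s, (y s - (∑ m, P *ᵥ (K m *ᵥ a m)) s) ^ 2)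
        + μ * ∑ m, Real.sqrt (a m ⬝ᵥ (K m *ᵥ a m))) :
    (∀ a : Fin M → Fin N → ℝ, ∃ α : Fin M → Fin S → ℝ,
        J (fun m => Pᵀ *ᵥ α m) ≤ J a) ∧
    ((∃ a0 : Fin M → Fin N → ℝ, ∀ a, J a0 ≤ J a) →
      ∃ α : Fin M → Fin S → ℝ, ∀ a, J (fun m => Pᵀ *ᵥ α m) ≤ J a) := by
  have main : ∀ a : Fin M → Fin N → ℝ, ∃ α : Fin M → Fin S → ℝ,
      J (fun m => Pᵀ *ᵥ α m) ≤ J a := by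
    intro a
    choose α hα1 hα2 using fun m => key_step (K m) (hK m) P (a m)
    refine ⟨α, ?_⟩
    rw [hJ, hJ]
    have hsum : (∑ m, P *ᵥ (K m *ᵥ (Pᵀ *ᵥ α m))) = ∑ m, P *ᵥ (K m *ᵥ a m) :=
      Finset.sum_congr rfl fun m _ => hα1 m
    apply add_le_add
    · apply le_of_eq
      rw [hsum]
    · apply mul_le_mul_of_nonneg_left _ hμ.le
      exact Finset.sum_le_sum fun m _ => Real.sqrt_le_sqrt (hα2 m)
  refine ⟨main, ?_⟩
  rintro ⟨a0, h0⟩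
  obtain ⟨α, hα⟩ := main a0
  exact ⟨α, fun a => hα.trans (h0 a)⟩
end
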